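/- Let Λ and Ω be lattices of full rank in ℝ² with successive minima λ₁(Λ) ≤ λ₂(Λ) and λ₁(Ω) ≤ λ₂(Ω), and let x₁, x₂ ∈ Λ and y₁, y₂ ∈ Ω be vectors corresponding to the respective successive minima. Suppose x₁ = y₁, the angle between x₁ and x₂ equals the angle between y₁ and y₂, and λ₁(Λ) = λ₂(Λ). Then Δ(Λ) ≥ Δ(Ω). -/

import Mathlib

noncomputable section

open InnerProductGeometry Real
open scoped Classical

/-- The Euclidean plane `ℝ²`. -/
abbrev E2 := EuclideanSpace ℝ (Fin 2)

/-- `x₁, x₂` form a ℤ-basis of the lattice `Λ ⊆ ℝ²`: they are linearly independent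
over ℝ and `Λ` is exactly the set of their integer linear combinations. -/
def IsZBasis (Λ : Set E2) (x₁ x₂ : E2) : Prop :=
  LinearIndependent ℝ ![x₁, x₂] ∧ Λ = {v : E2 | ∃ a b : ℤ, v = a • x₁ + b • x₂}

/-- `Λ` is a lattice of full rank in `ℝ²`, i.e. `Λ = XZ²` for an invertible matrix `X`. -/
def IsLattice (Λ : Set E2) : Prop := ∃ x₁ x₂ : E2, IsZBasis Λ x₁ x₂

/-- The `i`-th successive minimum of `Λ`:
`λᵢ = inf {λ > 0 : Λ ∩ λB contains i linearly independent nonzero vectors}`. -/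
noncomputable def succMin (Λ : Set E2) (i : ℕ) : ℝ :=
  sInf {r : ℝ | 0 < r ∧ ∃ v : Fin i → E2,
    (∀ j, v j ∈ Λ ∧ ‖v j‖ ≤ r) ∧ LinearIndependent ℝ v}

/-- `|det X|` for the basis matrix with columns `x₁, x₂`. -/
def detB (x₁ x₂ : E2) : ℝ := |x₁ 0 * x₂ 1 - x₁ 1 * x₂ 0|

/-- The determinant of a lattice: `|det X|` for a basis matrix `X` of `Λ`
(independent of the choice of basis). -/
noncomputable def latDet (Λ : Set E2) : ℝ :=
  if h : IsLattice Λ then detB h.choose h.choose_spec.choose else 0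

/-- The lattice packing density `Δ(Λ) = π λ₁² / (4 det Λ)`. -/
noncomputable def density (Λ : Set E2) : ℝ :=
  π * (succMin Λ 1) ^ 2 / (4 * latDet Λ)

/-- `x₁, x₂` are vectors of `Λ` corresponding to the successive minima, chosen so that
the angle between them lies in `[0, π/2]`. -/
def IsMinPair (Λ : Set E2) (x₁ x₂ : E2) : Prop :=
  x₁ ∈ Λ ∧ x₂ ∈ Λ ∧ LinearIndependent ℝ ![x₁, x₂] ∧
    ‖x₁‖ = succMin Λ 1 ∧ ‖x₂‖ = succMin Λ 2 ∧ angle x₁ x₂ ≤ π / 2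

/-- The angle `θ(Λ)` of a lattice: the angle between a pair of vectors corresponding to the
successive minima chosen with angle in `[0, π/2]` (for a well-rounded lattice this does not
depend on the choice of such a pair). -/
noncomputable def latAngle (Λ : Set E2) : ℝ :=
  if h : ∃ p : E2 × E2, IsMinPair Λ p.1 p.2 then angle h.choose.1 h.choose.2 else 0

/-- `Λ` and `Ω` are similar lattices: `Ω = α U Λ` for a nonzero real `α` and an
orthogonal `2×2` matrix `U`. -/
def LatSimilar (Λ Ω : Set E2) : Prop :=
  ∃ (α : ℝ) (U : Matrix (Fin 2) (Fin 2) ℝ), α ≠ 0 ∧ U.transpose * U = 1 ∧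
    Ω = (fun v => α • Matrix.toEuclideanLin U v) '' Λ

/-- The hexagonal lattice, spanned over ℤ by `(1, 0)` and `(1/2, √3/2)`. -/
def hexLattice : Set E2 :=
  {v : E2 | ∃ a b : ℤ, v = a • ((WithLp.equiv 2 (Fin 2 → ℝ)).symm ![1, 0]) +
    b • ((WithLp.equiv 2 (Fin 2 → ℝ)).symm ![1 / 2, Real.sqrt 3 / 2])}


section Aux

lemma inner_coords (x y : E2) : (inner ℝ x y : ℝ) = x 0 * y 0 + x 1 * y 1 := by
  simp [PiLp.inner_apply, Fin.sum_univ_two]; ring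

lemma detB_eq_sin (x y : E2) : detB x y = Real.sin (angle x y) * (‖x‖ * ‖y‖) := by
  rw [sin_angle_mul_norm_mul_norm, detB, ← Real.sqrt_sq_eq_abs]
  congr 1
  simp only [inner_coords]
  ring

lemma cross_ne_zero {x y : E2} (h : LinearIndependent ℝ ![x, y]) :
    x 0 * y 1 - x 1 * y 0 ≠ 0 := by
  rw [linearIndependent_fin2] at h
  simp only [Matrix.cons_val_one, Matrix.head_cons, Matrix.cons_val_zero] at h
  intro hc
  have hy : y 0 ≠ 0 ∨ y 1 ≠ 0 := by
    by_contra hcon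
    push_neg at hcon
    exact h.1 (PiLp.ext fun i => by fin_cases i <;> simp [hcon.1, hcon.2])
  rcases hy with h0 | h1
  · apply h.2 (x 0 / y 0)
    refine PiLp.ext fun i => ?_
    fin_cases i <;> simp [PiLp.smul_apply, smul_eq_mul]
    · field_simp
    · field_simp; nlinarith [hc]
  · apply h.2 (x 1 / y 1)
    refine PiLp.ext fun i => ?_
    fin_cases i <;> simp [PiLp.smul_apply, smul_eq_mul]
    · field_simp; nlinarith [hc]
    · field_simp

lemma sin_angle_pos {x y : E2} (h : LinearIndependent ℝ ![x, y]) :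
    0 < Real.sin (angle x y) := by
  have h' := LinearIndependent.pair_iff.1 h
  apply Real.sin_pos_of_pos_of_lt_pi
  · rcases (angle_nonneg x y).lt_or_eq with h0 | h0
    · exact h0
    · exfalso
      obtain ⟨-, r, -, hr⟩ := angle_eq_zero_iff.1 h0.symm
      have := h' r (-1) (by rw [hr]; module)
      norm_num at this
  · rcases (angle_le_pi x y).lt_or_eq with h0 | h0
    · exact h0
    · exfalso
      obtain ⟨-, r, -, hr⟩ := angle_eq_pi_iff.1 h0
      have := h' r (-1) (by rw [hr]; module)
      norm_num at this

lemma succMin_le_norm {Λ : Set E2} {v : E2} (hv : v ∈ Λ) (h0 : v ≠ 0) :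
    succMin Λ 1 ≤ ‖v‖ := by
  apply csInf_le ⟨0, fun r hr => hr.1.le⟩
  refine ⟨norm_pos_iff.2 h0, ![v], fun j => ?_, ?_⟩
  · fin_cases j; exact ⟨hv, le_rfl⟩
  · exact linearIndependent_unique_iff.2 (by simpa using h0)

lemma succMin2_le {Λ : Set E2} {x v : E2} (hx : x ∈ Λ) (hv : v ∈ Λ)
    (h : LinearIndependent ℝ ![x, v]) : succMin Λ 2 ≤ max ‖x‖ ‖v‖ := by
  apply csInf_le ⟨0, fun r hr => hr.1.le⟩
  refine ⟨lt_max_of_lt_left (norm_pos_iff.2 (h.ne_zero 0)), ![x, v], fun j => ?_, h⟩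
  fin_cases j
  · exact ⟨hx, le_max_left _ _⟩
  · exact ⟨hv, le_max_right _ _⟩

lemma zlat_add_mem {Λ : Set E2} {b₁ b₂ : E2}
    (hb : Λ = {v : E2 | ∃ a b : ℤ, v = a • b₁ + b • b₂}) {u w : E2}
    (hu : u ∈ Λ) (hw : w ∈ Λ) : u + w ∈ Λ := by
  rw [hb] at hu hw ⊢
  obtain ⟨a, b, rfl⟩ := hu
  obtain ⟨c, d, rfl⟩ := hw
  exact ⟨a + c, b + d, by rw [add_zsmul, add_zsmul]; abel⟩

lemma zlat_sub_mem {Λ : Set E2} {b₁ b₂ : E2}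
    (hb : Λ = {v : E2 | ∃ a b : ℤ, v = a • b₁ + b • b₂}) {u w : E2}
    (hu : u ∈ Λ) (hw : w ∈ Λ) : u - w ∈ Λ := by
  rw [hb] at hu hw ⊢
  obtain ⟨a, b, rfl⟩ := hu
  obtain ⟨c, d, rfl⟩ := hw
  exact ⟨a - c, b - d, by rw [sub_zsmul, sub_zsmul]; abel⟩

lemma zlat_zsmul_mem {Λ : Set E2} {b₁ b₂ : E2}
    (hb : Λ = {v : E2 | ∃ a b : ℤ, v = a • b₁ + b • b₂}) {u : E2}
    (hu : u ∈ Λ) (m : ℤ) : m • u ∈ Λ := by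
  rw [hb] at hu ⊢
  obtain ⟨a, b, rfl⟩ := hu
  exact ⟨m * a, m * b, by rw [smul_add, smul_smul, smul_smul, mul_zsmul, mul_zsmul]⟩

lemma reduce_zero {Λ : Set E2} {x₁ x₂ : E2} (hx : IsMinPair Λ x₁ x₂) {α β : ℝ}
    (hα : |α| ≤ 1 / 2) (hβ : |β| ≤ 1 / 2) (hmem : α • x₁ + β • x₂ ∈ Λ) :
    α = 0 ∧ β = 0 := by
  obtain ⟨hx1, hx2, hind, hn1, hn2, -⟩ := hx
  have hpair := LinearIndependent.pair_iff.1 hind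
  have hx1ne : x₁ ≠ 0 := hind.ne_zero 0
  have hx2ne : x₂ ≠ 0 := by simpa using hind.ne_zero 1
  have hl1pos : (0:ℝ) < ‖x₁‖ := norm_pos_iff.2 hx1ne
  have hl2pos : (0:ℝ) < ‖x₂‖ := norm_pos_iff.2 hx2ne
  have hl12 : ‖x₁‖ ≤ ‖x₂‖ := hn1 ▸ succMin_le_norm hx2 hx2ne
  by_contra hcon
  have hvne : α • x₁ + β • x₂ ≠ 0 := by
    intro h0
    exact hcon ⟨(hpair α β h0).1, (hpair α β h0).2⟩
  set v : E2 := α • x₁ + β • x₂ with hv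
  have hl1v : ‖x₁‖ ≤ ‖v‖ := hn1 ▸ succMin_le_norm hmem hvne
  by_cases hβ0 : β = 0
  · have hαne : α ≠ 0 := by
      intro h0; exact hvne (by rw [hv, h0, hβ0]; simp)
    have : ‖v‖ = |α| * ‖x₁‖ := by
      rw [hv, hβ0]; simp [norm_smul, Real.norm_eq_abs]
    have hαpos : 0 < |α| := abs_pos.2 hαne
    nlinarith [hl1v, this]
  · have hindv : LinearIndependent ℝ ![x₁, v] := by
      rw [LinearIndependent.pair_iff]
      intro s t hst
      have : (s + t * α) • x₁ + (t * β) • x₂ = 0 := by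
        rw [hv] at hst
        rw [← hst]; module
      obtain ⟨h1, h2⟩ := hpair _ _ this
      have ht : t = 0 := by
        rcases mul_eq_zero.1 h2 with h | h
        · exact h
        · exact absurd h hβ0
      constructor
      · rw [ht] at h1; simpa using h1
      · exact ht
    have hsm2 : succMin Λ 2 ≤ max ‖x₁‖ ‖v‖ := succMin2_le hx1 hmem hindv
    have hvlt : ‖v‖ < ‖x₂‖ := by
      by_cases hα0 : α = 0
      · have : ‖v‖ = |β| * ‖x₂‖ := by
          rw [hv, hα0]; simp [norm_smul, Real.norm_eq_abs]
        nlinarith [abs_pos.2 hβ0]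
      · have hns : ¬SameRay ℝ (α • x₁) (β • x₂) := by
          intro hsr
          have hne1 : α • x₁ ≠ 0 := smul_ne_zero hα0 hx1ne
          have hne2 : β • x₂ ≠ 0 := smul_ne_zero hβ0 hx2ne
          obtain ⟨r, s, hr, hs, hrs⟩ := hsr.exists_pos hne1 hne2
          have : (r * α) • x₁ + (-(s * β)) • x₂ = 0 := by
            rw [smul_smul, smul_smul] at hrs
            rw [neg_smul, ← hrs]; abel
          have := (hpair _ _ this).1
          rcases mul_eq_zero.1 this with h | h
          · exact hr.ne' h
          · exact hα0 h
        have h1 : ‖v‖ < ‖α • x₁‖ + ‖β • x₂‖ := norm_add_lt_of_not_sameRay hns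
        rw [norm_smul, norm_smul, Real.norm_eq_abs, Real.norm_eq_abs] at h1
        nlinarith [abs_nonneg α, abs_nonneg β]
    rw [← hn2] at hsm2
    rcases le_max_iff.1 hsm2 with h | h
    · linarith
    · linarith

lemma span_pair {x₁ x₂ : E2} (hind : LinearIndependent ℝ ![x₁, x₂]) (v : E2) :
    ∃ α β : ℝ, α • x₁ + β • x₂ = v := by
  have hcard : Fintype.card (Fin 2) = Module.finrank ℝ E2 := by
    simp [finrank_euclideanSpace_fin]
  have hspan : Submodule.span ℝ (Set.range ![x₁, x₂]) = ⊤ := by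
    have := (basisOfLinearIndependentOfCardEqFinrank hind hcard).span_eq
    rwa [coe_basisOfLinearIndependentOfCardEqFinrank] at this
  have hrange : Set.range ![x₁, x₂] = {x₁, x₂} := by
    simp [Matrix.range_cons, Matrix.range_empty, Set.pair_comm]
  rw [hrange] at hspan
  have : v ∈ Submodule.span ℝ ({x₁, x₂} : Set E2) := by rw [hspan]; trivial
  exact Submodule.mem_span_pair.1 this

lemma minpair_basis {Λ : Set E2} {x₁ x₂ : E2} (hΛ : IsLattice Λ)
    (hx : IsMinPair Λ x₁ x₂) : IsZBasis Λ x₁ x₂ := by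
  obtain ⟨b₁, b₂, hbind, hbeq⟩ := hΛ
  refine ⟨hx.2.2.1, ?_⟩
  ext v
  constructor
  · intro hv
    obtain ⟨α, β, hαβ⟩ := span_pair hx.2.2.1 v
    set m := round α with hm
    set n := round β with hn
    have hmem : (α - m) • x₁ + (β - n) • x₂ ∈ Λ := by
      have h1 : v - m • x₁ ∈ Λ := zlat_sub_mem hbeq hv (zlat_zsmul_mem hbeq hx.1 m)
      have h2 : v - m • x₁ - n • x₂ ∈ Λ :=
        zlat_sub_mem hbeq h1 (zlat_zsmul_mem hbeq hx.2.1 n)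
      have he : (α - m) • x₁ + (β - n) • x₂ = v - m • x₁ - n • x₂ := by
        rw [← hαβ, ← Int.cast_smul_eq_zsmul ℝ m x₁, ← Int.cast_smul_eq_zsmul ℝ n x₂]
        module
      rwa [he]
    obtain ⟨h1, h2⟩ := reduce_zero hx (abs_sub_round α) (abs_sub_round β) hmem
    refine ⟨m, n, ?_⟩
    have hαm : α = (m : ℝ) := by linarith [sub_eq_zero.1 (by linarith [h1] : α - (m:ℝ) = 0)]
    have hβn : β = (n : ℝ) := by linarith
    rw [← hαβ, hαm, hβn, Int.cast_smul_eq_zsmul, Int.cast_smul_eq_zsmul]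
  · rintro ⟨a, b, rfl⟩
    exact zlat_add_mem hbeq (zlat_zsmul_mem hbeq hx.1 a) (zlat_zsmul_mem hbeq hx.2.1 b)

lemma detB_zsmul (b₁ b₂ x₁ x₂ : E2) (p q r s : ℤ)
    (h1 : x₁ = p • b₁ + q • b₂) (h2 : x₂ = r • b₁ + s • b₂) :
    detB x₁ x₂ = |((p * s - q * r : ℤ) : ℝ)| * detB b₁ b₂ := by
  have e1 : x₁ = (p : ℝ) • b₁ + (q : ℝ) • b₂ := by
    rw [h1, Int.cast_smul_eq_zsmul, Int.cast_smul_eq_zsmul]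
  have e2 : x₂ = (r : ℝ) • b₁ + (s : ℝ) • b₂ := by
    rw [h2, Int.cast_smul_eq_zsmul, Int.cast_smul_eq_zsmul]
  rw [detB, detB, e1, e2, ← abs_mul]
  congr 1
  simp only [PiLp.add_apply, PiLp.smul_apply, smul_eq_mul]
  push_cast
  ring

lemma detB_bases {Λ : Set E2} {b₁ b₂ x₁ x₂ : E2} (hb : IsZBasis Λ b₁ b₂)
    (hx : IsZBasis Λ x₁ x₂) : detB b₁ b₂ = detB x₁ x₂ := by
  have hb1 : b₁ ∈ Λ := by rw [hb.2]; exact ⟨1, 0, by simp⟩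
  have hb2 : b₂ ∈ Λ := by rw [hb.2]; exact ⟨0, 1, by simp⟩
  have hx1 : x₁ ∈ Λ := by rw [hx.2]; exact ⟨1, 0, by simp⟩
  have hx2 : x₂ ∈ Λ := by rw [hx.2]; exact ⟨0, 1, by simp⟩
  obtain ⟨p, q, h1⟩ : ∃ p q : ℤ, x₁ = p • b₁ + q • b₂ := by
    have := hx1; rwa [hb.2] at this
  obtain ⟨r, s, h2⟩ : ∃ r s : ℤ, x₂ = r • b₁ + s • b₂ := by
    have := hx2; rwa [hb.2] at this
  obtain ⟨p', q', h1'⟩ : ∃ p' q' : ℤ, b₁ = p' • x₁ + q' • x₂ := by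
    have := hb1; rwa [hx.2] at this
  obtain ⟨r', s', h2'⟩ : ∃ r' s' : ℤ, b₂ = r' • x₁ + s' • x₂ := by
    have := hb2; rwa [hx.2] at this
  have e1 := detB_zsmul b₁ b₂ x₁ x₂ p q r s h1 h2
  have e2 := detB_zsmul x₁ x₂ b₁ b₂ p' q' r' s' h1' h2'
  have hpos : 0 < detB x₁ x₂ := abs_pos.2 (cross_ne_zero hx.1)
  set d₁ : ℤ := p * s - q * r
  set d₂ : ℤ := p' * s' - q' * r'
  have key : |((d₂ * d₁ : ℤ) : ℝ)| = 1 := by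
    have : detB x₁ x₂ = |((d₂ * d₁ : ℤ) : ℝ)| * detB x₁ x₂ := by
      rw [Int.cast_mul, abs_mul]
      calc detB x₁ x₂ = |((d₁ : ℤ) : ℝ)| * detB b₁ b₂ := e1
        _ = |((d₁ : ℤ) : ℝ)| * (|((d₂ : ℤ) : ℝ)| * detB x₁ x₂) := by rw [← e2]
        _ = |((d₂ : ℤ) : ℝ)| * |((d₁ : ℤ) : ℝ)| * detB x₁ x₂ := by ring
    nlinarith [this, hpos]
  have key2 : |d₂ * d₁| = 1 := by exact_mod_cast key
  have hd2 : |d₂| = 1 := by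
    have h' : |d₂| * |d₁| = 1 := by rwa [← abs_mul]
    rcases Int.mul_eq_one_iff_eq_one_or_neg_one.1 h' with ⟨h, -⟩ | ⟨h, -⟩
    · exact h
    · exfalso; have := abs_nonneg d₂; omega
  calc detB b₁ b₂ = |((d₂ : ℤ) : ℝ)| * detB x₁ x₂ := e2
    _ = detB x₁ x₂ := by rw [← Int.cast_abs, hd2]; simp

end Aux

/-- If `x₁, x₂` and `y₁, y₂` correspond to the successive minima of full-rank
lattices `Λ` and `Ω` respectively, `x₁ = y₁`, the angles between the pairs agree, and
`λ₁(Λ) = λ₂(Λ)`, then `Δ(Λ) ≥ Δ(Ω)`. -/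
theorem stmt4 (Λ Ω : Set E2) (hΛ : IsLattice Λ) (hΩ : IsLattice Ω)
    (x₁ x₂ y₁ y₂ : E2) (hx : IsMinPair Λ x₁ x₂) (hy : IsMinPair Ω y₁ y₂)
    (heq : x₁ = y₁) (hangle : angle x₁ x₂ = angle y₁ y₂)
    (hWR : succMin Λ 1 = succMin Λ 2) :
    density Ω ≤ density Λ := by
  have hxb := minpair_basis hΛ hx
  have hyb := minpair_basis hΩ hy
  have hdl : latDet Λ = detB x₁ x₂ := by
    unfold latDet
    rw [dif_pos hΛ]
    exact detB_bases hΛ.choose_spec.choose_spec hxb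
  have hdo : latDet Ω = detB y₁ y₂ := by
    unfold latDet
    rw [dif_pos hΩ]
    exact detB_bases hΩ.choose_spec.choose_spec hyb
  obtain ⟨hx1m, hx2m, hindx, hn1, hn2, -⟩ := hx
  obtain ⟨hy1m, hy2m, hindy, hm1, hm2, -⟩ := hy
  have hy2ne : y₂ ≠ 0 := by simpa using hindy.ne_zero 1
  have hmu : ‖y₁‖ ≤ ‖y₂‖ := hm1 ▸ succMin_le_norm hy2m hy2ne
  have hy1pos : (0:ℝ) < ‖y₁‖ := norm_pos_iff.2 (hindy.ne_zero 0)
  have hx1pos : (0:ℝ) < ‖x₁‖ := norm_pos_iff.2 (hindx.ne_zero 0)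
  have hx2n : ‖x₂‖ = ‖x₁‖ := by rw [hn2, ← hWR, ← hn1]
  rw [density, density, hdl, hdo, detB_eq_sin, detB_eq_sin, hangle, ← hn1, ← hm1, hx2n]
  set sθ := Real.sin (angle y₁ y₂) with hsθ
  have hspos : 0 < sθ := sin_angle_pos hindy
  have hy2pos : (0:ℝ) < ‖y₂‖ := hy1pos.trans_le hmu
  rw [div_le_div_iff₀ (by nlinarith [mul_pos hspos (mul_pos hy1pos hy2pos)])
    (by nlinarith [mul_pos hspos (mul_pos hx1pos hx1pos)])]
  nlinarith [Real.pi_pos, mul_pos hy1pos hy1pos, mul_pos hx1pos hx1pos,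
    mul_le_mul_of_nonneg_left hmu (norm_nonneg y₁),
    mul_pos (mul_pos hx1pos hx1pos) hspos,
    mul_pos (mul_pos Real.pi_pos hspos) (mul_pos (mul_pos hx1pos hx1pos) (mul_pos hy1pos hy1pos))]
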